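/- Let G be an abelian topological group and let G₀ ≤ G be an open subgroup that is divisible as an abstract abelian group. Then the short exact sequence 0 → G₀ → G → G/G₀ → 0 splits topologically: G is topologically isomorphic to G₀ ⊕ G/G₀, where G/G₀ carries the discrete topology. -/

import Mathlib

theorem open_divisible_subgroup_splits {G : Type*} [CommGroup G] [TopologicalSpace G]
    [IsTopologicalGroup G] (H : Subgroup G) (hopen : IsOpen (H : Set G))
    (hdiv : ∀ (x : H) (n : ℕ), n ≠ 0 → ∃ y : H, y ^ n = x) :
    ∃ e : G ≃ₜ (H × (G ⧸ H)), ∀ x y : G, e (x * y) = e x * e y := by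
  classical
  -- Divisibility instances on the additivization of H
  haveI : DivisibleBy (Additive ↥H) ℕ :=
    { div := fun a n => if hn : n = 0 then 0 else
        Additive.ofMul (hdiv (Additive.toMul a) n hn).choose
      div_zero := fun a => by simp
      div_cancel := fun {n} a hn => by
        rw [dif_neg hn, ← ofMul_pow, (hdiv (Additive.toMul a) n hn).choose_spec]
        rfl }
  haveI : DivisibleBy (Additive ↥H) ℤ := AddGroup.divisibleByIntOfDivisibleByNat _
  -- Extension of the identity along the inclusion, by Baer's criterion
  set f : Additive ↥H →ₗ[ℤ] Additive G :=
    (MonoidHom.toAdditive H.subtype).toIntLinearMap with hf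
  have finj : Function.Injective f := by
    intro a b hab
    exact Additive.toMul.injective (Subtype.ext (congrArg Additive.toMul hab))
  obtain ⟨φ, hφ⟩ := (Module.Baer.of_divisible (Additive ↥H)).extension_property f finj
    LinearMap.id
  -- The retraction r : G →* H
  set r : G →* ↥H := MonoidHom.toAdditive.symm φ.toAddMonoidHom with hr
  have key : ∀ h : ↥H, r ↑h = h := by
    intro h
    have := LinearMap.ext_iff.mp hφ (Additive.ofMul h)
    simpa [hr, hf] using congrArg Additive.toMul this
  -- The splitting homomorphism
  set ψ : G →* ↥H × (G ⧸ H) := r.prod (QuotientGroup.mk' H) with hψ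
  have hinj : Function.Injective ψ := by
    rw [injective_iff_map_eq_one]
    intro g hg
    have h2 : QuotientGroup.mk' H g = 1 := congrArg Prod.snd hg
    have hgH : g ∈ H := (QuotientGroup.eq_one_iff g).mp h2
    have h1 : r g = 1 := congrArg Prod.fst hg
    have := key ⟨g, hgH⟩
    rw [h1] at this
    simpa using congrArg Subtype.val this.symm
  -- explicit inverse
  set c : G ⧸ H → G := fun q => Quotient.out q * (↑(r (Quotient.out q)))⁻¹ with hc
  set ι : ↥H × (G ⧸ H) → G := fun p => ↑p.1 * c p.2 with hι
  have hmkout : ∀ q : G ⧸ H, QuotientGroup.mk (Quotient.out q) = q := fun q =>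
    Quotient.out_eq q
  have right_inv : ∀ p : ↥H × (G ⧸ H), ψ (ι p) = p := by
    rintro ⟨h, q⟩
    have hfst : r (ι (h, q)) = h := by
      have : r (ι (h, q)) = r ↑h * (r (Quotient.out q) * r ↑(r (Quotient.out q))⁻¹) := by
        simp [hι, hc, map_mul]
      rw [this, key h, key, mul_inv_cancel, mul_one]
    have hsnd : QuotientGroup.mk' H (ι (h, q)) = q := by
      have e1 : QuotientGroup.mk' H (↑h : G) = 1 := (QuotientGroup.eq_one_iff _).mpr h.2
      have e2 : QuotientGroup.mk' H (↑(r (Quotient.out q))⁻¹ : G) = 1 :=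
        (QuotientGroup.eq_one_iff _).mpr (H.inv_mem (r (Quotient.out q)).2)
      have : QuotientGroup.mk' H (ι (h, q)) =
          QuotientGroup.mk' H ↑h * (QuotientGroup.mk' H (Quotient.out q) *
            QuotientGroup.mk' H ↑(r (Quotient.out q))⁻¹) := by
        simp [hι, hc, map_mul]
      rw [this, e1, e2, one_mul, mul_one]
      exact hmkout q
    exact Prod.ext hfst hsnd
  have left_inv : ∀ g : G, ι (ψ g) = g := fun g => hinj (right_inv (ψ g))
  -- continuity of r
  have hrcont : Continuous r := by
    apply continuous_of_continuousAt_one r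
    rw [ContinuousAt, map_one, tendsto_subtype_rng]
    have hmem : ∀ᶠ x in nhds (1 : G), x ∈ H :=
      hopen.mem_nhds H.one_mem
    have heq : (fun x : G => (↑(r x) : G)) =ᶠ[nhds (1 : G)] id := by
      filter_upwards [hmem] with x hx
      have := key ⟨x, hx⟩
      simpa using congrArg Subtype.val this
    exact Filter.Tendsto.congr' heq.symm (by simpa using Filter.tendsto_id)
  haveI : DiscreteTopology (G ⧸ H) := QuotientGroup.discreteTopology hopen
  have hιcont : Continuous ι := by
    apply Continuous.mul
    · exact continuous_subtype_val.comp continuous_fst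
    · exact (continuous_of_discreteTopology (f := c)).comp continuous_snd
  refine ⟨⟨⟨ψ, ι, left_inv, right_inv⟩, ?_, hιcont⟩, fun x y => map_mul ψ x y⟩
  exact hrcont.prodMk continuous_quotient_mk'
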